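/- arXiv:1605.09534 — 18 statements merged into one kernel-verified Lean document; each statement's English description precedes it below -/
import Mathlib

section
/- Let R be a ring and let e, f be idempotents in R such that e - f is nilpotent. Then e and f are conjugate in R, i.e., there exists a unit u of R with e = u f u⁻¹. -/
/-- If `e, f` are idempotents with `e - f` nilpotent, then `e` and `f` are conjugate. -/
theorem idempotents_conj_of_sub_nilpotent {R : Type*} [Ring R] (e f : R)
    (he : IsIdempotentElem e) (hf : IsIdempotentElem f) (h : IsNilpotent (e - f)) :
    ∃ u : Rˣ, e = u * f * ↑u⁻¹ := by
  set v : R := e * f + (1 - e) * (1 - f) with hv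
  set w : R := f * e + (1 - f) * (1 - e) with hw
  set z : R := (e - f) ^ 2 with hz
  have he2 : ∀ x : R, e * (e * x) = e * x := fun x => by rw [← mul_assoc, he]
  have hf2 : ∀ x : R, f * (f * x) = f * x := fun x => by rw [← mul_assoc, hf]
  have hvw : v * w = 1 - z := by
    simp only [hv, hw, hz, mul_add, add_mul, mul_sub, sub_mul, mul_one, one_mul, mul_assoc,
      he.eq, hf.eq, he2, hf2, pow_two]
    abel
  have hwv : w * v = 1 - z := by
    simp only [hv, hw, hz, mul_add, add_mul, mul_sub, sub_mul, mul_one, one_mul, mul_assoc,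
      he.eq, hf.eq, he2, hf2, pow_two]
    abel
  have hcomm : (1 - z) * w = w * (1 - z) := by
    simp only [hz, hw, mul_add, add_mul, mul_sub, sub_mul, mul_one, one_mul, mul_assoc,
      he.eq, hf.eq, he2, hf2, pow_two]
    abel
  obtain ⟨U, hU⟩ := (h.pow_of_pos two_pos.ne').isUnit_one_sub
  have hUz : (U : R) = 1 - z := by rw [hU, hz]
  have hcomm' : (↑U⁻¹ : R) * w = w * ↑U⁻¹ := by
    have : Commute (U : R) w := by rw [hUz]; exact hcomm
    exact this.units_inv_left
  refine ⟨⟨v, w * ↑U⁻¹, ?_, ?_⟩, ?_⟩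
  · rw [← mul_assoc, hvw, ← hUz, U.mul_inv]
  · rw [← hcomm', mul_assoc, hwv, ← hUz, U.inv_mul]
  · rw [Units.eq_mul_inv_iff_mul_eq]
    show e * v = v * f
    simp only [hv, mul_add, add_mul, mul_sub, sub_mul, mul_one, one_mul, mul_assoc,
      he.eq, hf.eq, he2, hf2]
    abel
end

section
/- Let R be a ring and let e, f be idempotents in R such that e - f lies in the Jacobson radical J(R). Then e and f are conjugate in R. -/
lemma isUnit_one_add_of_mem_jacobson_bot' {R : Type*} [Ring R] (r : R)
    (h : r ∈ Ideal.jacobson (⊥ : Ideal R)) : IsUnit (r + 1) := by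
  obtain ⟨s, hs⟩ := Ideal.exists_mul_add_sub_mem_of_mem_jacobson r h
  rw [Ideal.mem_bot, sub_eq_zero] at hs
  have hs1 : s - 1 ∈ Ideal.jacobson (⊥ : Ideal R) := by
    have h3 := hs
    rw [mul_add, mul_one] at h3
    have h2 : s - 1 = -(s * r) := by rw [← h3]; abel
    rw [h2]
    exact neg_mem (Ideal.mul_mem_left _ s h)
  obtain ⟨t, ht⟩ := Ideal.exists_mul_sub_mem_of_sub_one_mem_jacobson s hs1
  rw [Ideal.mem_bot, sub_eq_zero] at ht
  have htr : t = r + 1 := by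
    calc t = t * (s * (r + 1)) := by rw [hs, mul_one]
    _ = (t * s) * (r + 1) := by rw [mul_assoc]
    _ = r + 1 := by rw [ht, one_mul]
  exact ⟨⟨r + 1, s, htr ▸ ht, hs⟩, rfl⟩

/-- If `e, f` are idempotents with `e - f` in the Jacobson radical, then `e` and `f`
are conjugate. -/
theorem idempotents_conj_of_sub_mem_jacobson {R : Type*} [Ring R] (e f : R)
    (he : IsIdempotentElem e) (hf : IsIdempotentElem f)
    (h : e - f ∈ Ideal.jacobson (⊥ : Ideal R)) :
    ∃ u : Rˣ, e = u * f * ↑u⁻¹ := by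
  set v : R := e * f + (1 - e) * (1 - f) with hv
  have h1e : (1 - e) * (f - e) = f - e * f := by
    rw [sub_mul, one_mul, mul_sub, he]; abel
  have hmem : v - 1 ∈ Ideal.jacobson (⊥ : Ideal R) := by
    have h1 : (1 - e) * (f - e) ∈ Ideal.jacobson (⊥ : Ideal R) :=
      Ideal.mul_mem_left _ _ (by simpa using neg_mem h)
    have heq : v - 1 = -((e - f) + 2 * ((1 - e) * (f - e))) := by
      rw [h1e, hv]; noncomm_ring
    rw [heq]
    exact neg_mem (add_mem h (Ideal.mul_mem_left _ 2 h1))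
  have hu : IsUnit v := by
    have := isUnit_one_add_of_mem_jacobson_bot' (v - 1) hmem
    simpa using this
  obtain ⟨u, hu⟩ := hu
  have h0 : e * (1 - e) = 0 := by rw [mul_sub, mul_one, he, sub_self]
  have h0' : (1 - f) * f = 0 := by rw [sub_mul, one_mul, hf, sub_self]
  have key : e * v = v * f := by
    have l1 : e * v = e * e * f + e * (1 - e) * (1 - f) := by rw [hv]; noncomm_ring
    have l2 : v * f = e * (f * f) + (1 - e) * ((1 - f) * f) := by rw [hv]; noncomm_ring
    rw [l1, l2, he, hf, h0, h0', zero_mul, mul_zero, add_zero]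
  refine ⟨u, ?_⟩
  rw [hu, ← key, ← hu, mul_assoc, Units.mul_inv, mul_one]
end

section
/- Let R be a clean ring and I an ideal of R. Then idempotents lift modulo I: for any a ∈ R with a² - a ∈ I there exists an idempotent e ∈ R with e - a ∈ I. -/
/-- In a clean ring, idempotents lift modulo every (two-sided) ideal. -/
theorem idempotents_lift_of_clean {R : Type*} [Ring R]
    (hclean : ∀ a : R, ∃ e u : R, IsIdempotentElem e ∧ IsUnit u ∧ a = e + u)
    (I : TwoSidedIdeal R) (a : R) (ha : a ^ 2 - a ∈ I) :
    ∃ e : R, IsIdempotentElem e ∧ e - a ∈ I := by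
  obtain ⟨e, u, he, hu, hae⟩ := hclean a
  obtain ⟨v, rfl⟩ := hu
  have hv : (v : R) = a - e := by rw [hae, add_sub_cancel_left]
  have h1 : IsIdempotentElem (1 - e) := he.one_sub
  refine ⟨↑v⁻¹ * (1 - e) * v, ?_, ?_⟩
  · show (↑v⁻¹ * (1 - e) * v) * (↑v⁻¹ * (1 - e) * v) = ↑v⁻¹ * (1 - e) * v
    calc (↑v⁻¹ * (1 - e) * v) * (↑v⁻¹ * (1 - e) * v)
        = ↑v⁻¹ * ((1 - e) * (↑v * ↑v⁻¹) * (1 - e)) * v := by noncomm_ring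
      _ = ↑v⁻¹ * ((1 - e) * (1 - e)) * v := by rw [Units.mul_inv]; rw [mul_one]
      _ = ↑v⁻¹ * (1 - e) * v := by rw [h1.eq]
  · have h2 : (1 - e) * (v : R) - v * a = a - a ^ 2 := by
      have heq : e * e = e := he.eq
      calc (1 - e) * (v : R) - v * a
          = (1 - e) * (a - e) - (a - e) * a := by rw [hv]
        _ = a - e * a - e + e * e - (a * a - e * a) := by noncomm_ring
        _ = a - a ^ 2 := by rw [heq]; noncomm_ring
    have key : ↑v⁻¹ * (1 - e) * v - a = ↑v⁻¹ * (a - a ^ 2) := by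
      have : a = ↑v⁻¹ * (↑v * a) := by rw [Units.inv_mul_cancel_left]
      rw [mul_assoc, this, ← mul_sub, h2]
      rw [Units.inv_mul_cancel_left]
    rw [key]
    have : a - a ^ 2 = -(a ^ 2 - a) := (neg_sub _ _).symm
    rw [this]
    exact I.mul_mem_left _ _ (I.neg_mem ha)
end

section
/- Let I be an ideal of a ring R contained in J(R) such that idempotents lift modulo I. If e, f are idempotents of R whose images in R/I are conjugate in R/I, then e and f are conjugate in R. -/
lemma isUnit_one_add_jac {R : Type*} [Ring R] {x : R}
    (hx : x ∈ Ideal.jacobson (⊥ : Ideal R)) : IsUnit (1 + x) := by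
  have key : ∀ y : R, y ∈ Ideal.jacobson (⊥ : Ideal R) → ∃ z : R, z * (1 + y) = 1 := by
    intro y hy
    obtain ⟨z, hz⟩ := Ideal.mem_jacobson_iff.1 hy 1
    rw [Ideal.mem_bot] at hz
    exact ⟨z, by linear_combination (norm := noncomm_ring) hz⟩
  obtain ⟨z, hz⟩ := key x hx
  have hz1 : z - 1 ∈ Ideal.jacobson (⊥ : Ideal R) := by
    have h2 : z - 1 = -(z * x) := by linear_combination (norm := noncomm_ring) hz
    rw [h2]
    exact neg_mem (Ideal.mul_mem_left _ z hx)
  obtain ⟨w, hw⟩ := key (z - 1) hz1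
  rw [add_sub_cancel] at hw
  have hwe : w = 1 + x := by
    calc w = w * (z * (1 + x)) := by rw [hz, mul_one]
    _ = (w * z) * (1 + x) := by rw [mul_assoc]
    _ = 1 + x := by rw [hw, one_mul]
  exact ⟨⟨1 + x, z, by rw [← hwe, hw], hz⟩, rfl⟩

lemma sub_mem_of_mk'_eq {R : Type*} [Ring R] (I : TwoSidedIdeal R) {a b : R}
    (h : I.ringCon.mk' a = I.ringCon.mk' b) : a - b ∈ I :=
  (TwoSidedIdeal.rel_iff I a b).mp (Quotient.eq''.mp h)


/-- If `I ⊆ J(R)`, idempotents lift modulo `I`, and the images of idempotents `e, f` are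
conjugate in `R/I`, then `e` and `f` are conjugate in `R`. -/
theorem conj_of_conj_quotient {R : Type*} [Ring R] (I : TwoSidedIdeal R)
    (hI : ∀ x ∈ I, x ∈ Ideal.jacobson (⊥ : Ideal R))
    (hlift : ∀ a : R, a ^ 2 - a ∈ I → ∃ e : R, IsIdempotentElem e ∧ e - a ∈ I)
    (e f : R) (he : IsIdempotentElem e) (hf : IsIdempotentElem f)
    (h : ∃ v : (I.ringCon.Quotient)ˣ, I.ringCon.mk' e = v * I.ringCon.mk' f * ↑v⁻¹) :
    ∃ u : Rˣ, e = u * f * ↑u⁻¹ := by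
  obtain ⟨v, hv⟩ := h
  -- a unit of R lifting v
  have hIU : ∀ r : R, r - 1 ∈ I → IsUnit r := by
    intro r hr
    have := isUnit_one_add_jac (hI _ hr)
    rwa [add_sub_cancel] at this
  obtain ⟨a, ha⟩ := Quotient.exists_rep (v : I.ringCon.Quotient)
  obtain ⟨b, hb⟩ := Quotient.exists_rep ((v⁻¹ : _) : I.ringCon.Quotient)
  have ha' : I.ringCon.mk' a = (v : I.ringCon.Quotient) := ha
  have hb' : I.ringCon.mk' b = ((v⁻¹ : _) : I.ringCon.Quotient) := hb
  have hab : IsUnit (a * b) := by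
    apply hIU
    apply sub_mem_of_mk'_eq
    rw [map_mul, map_one, ha', hb', Units.mul_inv]
  have hba : IsUnit (b * a) := by
    apply hIU
    apply sub_mem_of_mk'_eq
    rw [map_mul, map_one, ha', hb', Units.inv_mul]
  -- a is a unit
  have haU : IsUnit a := by
    obtain ⟨u1, hu1⟩ := hab
    obtain ⟨u2, hu2⟩ := hba
    have hr : a * (b * ↑u1⁻¹) = 1 := by
      rw [← mul_assoc, ← hu1, Units.mul_inv]
    have hl : (↑u2⁻¹ * b) * a = 1 := by
      rw [mul_assoc, ← hu2, Units.inv_mul]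
    have : ↑u2⁻¹ * b = b * ↑u1⁻¹ := by
      calc (↑u2⁻¹ * b : R) = (↑u2⁻¹ * b) * (a * (b * ↑u1⁻¹)) := by rw [hr, mul_one]
      _ = ((↑u2⁻¹ * b) * a) * (b * ↑u1⁻¹) := by noncomm_ring
      _ = b * ↑u1⁻¹ := by rw [hl, one_mul]
    exact ⟨⟨a, b * ↑u1⁻¹, hr, by rw [← this, hl]⟩, rfl⟩
  obtain ⟨ua, hua⟩ := haU
  -- g := ua f ua⁻¹
  set g : R := ↑ua * f * ↑ua⁻¹ with hg
  have hgidem : IsIdempotentElem g := by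
    unfold g
    unfold IsIdempotentElem
    calc (↑ua * f * ↑ua⁻¹) * (↑ua * f * ↑ua⁻¹)
        = ↑ua * (f * (↑ua⁻¹ * ↑ua) * f) * ↑ua⁻¹ := by noncomm_ring
    _ = ↑ua * f * ↑ua⁻¹ := by rw [Units.inv_mul, mul_one, hf]
  have hmkinv : I.ringCon.mk' (↑ua⁻¹ : R) = ((v⁻¹ : _) : I.ringCon.Quotient) := by
    symm
    apply Units.inv_eq_of_mul_eq_one_left
    rw [← ha', ← hua, ← map_mul, Units.inv_mul, map_one]
  have heg : e - g ∈ I := by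
    apply sub_mem_of_mk'_eq
    rw [hg, map_mul, map_mul, hmkinv]
    have : I.ringCon.mk' (↑ua : R) = (v : I.ringCon.Quotient) := by rw [hua]; exact ha'
    rw [this, ← hv]
  -- c := e*g + (1-e)*(1-g)
  set c : R := e * g + (1 - e) * (1 - g) with hc
  have hc1 : c - 1 ∈ I := by
    have hd : c - 1 = -(e * (e - g)) + (e - g) * g + (e * e - e) + (g * g - g) := by
      rw [hc]; noncomm_ring
    rw [hd, he, hgidem, sub_self, sub_self, add_zero, add_zero]
    exact I.add_mem (I.neg_mem (I.mul_mem_left _ _ heg)) (I.mul_mem_right _ _ heg)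
  obtain ⟨uc, huc⟩ := hIU c hc1
  have hec : e * c = c * g := by
    have h1 : e * c = e * e * g + (e - e * e) * (1 - g) := by rw [hc]; noncomm_ring
    have h2 : c * g = e * (g * g) + (1 - e) * (g - g * g) := by rw [hc]; noncomm_ring
    rw [h1, h2, he, hgidem]; simp
  -- final unit
  refine ⟨uc * ua, ?_⟩
  have key : e * ↑(uc * ua) = ↑(uc * ua) * f := by
    rw [Units.val_mul, ← mul_assoc, huc, hec]
    calc c * g * ↑ua = c * (↑ua * f * ↑ua⁻¹ * ↑ua) := by rw [hg, mul_assoc]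
    _ = c * (↑ua * f) := by rw [mul_assoc (↑ua * f), Units.inv_mul, mul_one]
    _ = c * ↑ua * f := by rw [mul_assoc]
  calc e = e * ↑(uc * ua) * ↑(uc * ua)⁻¹ := by rw [mul_assoc, Units.mul_inv, mul_one]
  _ = ↑(uc * ua) * f * ↑(uc * ua)⁻¹ := by rw [key]
end

section
/- A ring R is uniquely clean if and only if R is conjugate clean and all idempotents of R are central. -/
/-- Two idempotents are conjugate by a unit. -/
def ConjugateIdem {R : Type*} [Ring R] (e f : R) : Prop := ∃ u : Rˣ, e = u * f * ↑u⁻¹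

/-- `a` is clean: a sum of an idempotent and a unit. -/
def IsCleanElem {R : Type*} [Ring R] (a : R) : Prop :=
  ∃ e u : R, IsIdempotentElem e ∧ IsUnit u ∧ a = e + u

/-- `a` is conjugate clean. -/
def IsConjCleanElem {R : Type*} [Ring R] (a : R) : Prop :=
  IsCleanElem a ∧ ∀ e u f v : R, IsIdempotentElem e → IsUnit u → a = e + u →
    IsIdempotentElem f → IsUnit v → a = f + v → ConjugateIdem e f

lemma unit_of_sq_zero {R : Type*} [Ring R] (n : R) (h : n * n = 0) : IsUnit (n - 1) := by
  refine isUnit_iff_exists.2 ⟨-(n + 1), ?_, ?_⟩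
  · have : (n - 1) * -(n + 1) = -(n * n) + 1 := by noncomm_ring
    rw [this, h]; simp
  · have : -(n + 1) * (n - 1) = -(n * n) + 1 := by noncomm_ring
    rw [this, h]; simp

/-- `R` is uniquely clean iff it is conjugate clean and all idempotents are central. -/
theorem uniquelyClean_iff_conjClean_and_idem_central {R : Type*} [Ring R] :
    (∀ a : R, IsCleanElem a ∧
      ∀ e u f v : R, IsIdempotentElem e → IsUnit u → a = e + u →
        IsIdempotentElem f → IsUnit v → a = f + v → e = f ∧ u = v) ↔
    ((∀ a : R, IsConjCleanElem a) ∧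
      ∀ e : R, IsIdempotentElem e → ∀ r : R, e * r = r * e) := by
  constructor
  · intro h
    constructor
    · intro a
      obtain ⟨hc, hu⟩ := h a
      refine ⟨hc, ?_⟩
      intro e u f v he hu' hae hf hv haf
      obtain ⟨hef, -⟩ := hu e u f v he hu' hae hf hv haf
      exact ⟨1, by simp [hef]⟩
    · intro e he r
      have he' : e * e = e := he
      have hee : ∀ x : R, e * (e * x) = e * x := fun x => by rw [← mul_assoc, he']
      have step : ∀ n : R, n * n = 0 → IsIdempotentElem (e + n) → n = 0 := by
        intro n hn2 hf
        have hu1 : IsUnit (n - 1) := unit_of_sq_zero n hn2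
        have key := (h (e + n - 1)).2 (e + n) (-1) e (n - 1) hf (isUnit_one.neg)
          (by abel) he hu1 (by abel)
        have h1 : e + n = e := key.1
        have := congrArg (fun x => x - e) h1
        simpa using this
      have h1 : e * r - e * r * e = 0 := by
        apply step
        · simp only [mul_sub, sub_mul, mul_assoc, he', hee]
          abel
        · unfold IsIdempotentElem
          simp only [mul_add, add_mul, mul_sub, sub_mul, mul_assoc, he', hee]
          abel
      have h2 : r * e - e * r * e = 0 := by
        apply step
        · simp only [mul_sub, sub_mul, mul_assoc, he', hee]
          abel
        · unfold IsIdempotentElem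
          simp only [mul_add, add_mul, mul_sub, sub_mul, mul_assoc, he', hee]
          abel
      exact (sub_eq_zero.mp h1).trans (sub_eq_zero.mp h2).symm
  · rintro ⟨hcc, hcent⟩ a
    obtain ⟨hc, hconj⟩ := hcc a
    refine ⟨hc, ?_⟩
    intro e u f v he hu hae hf hv haf
    obtain ⟨w, hw⟩ := hconj e u f v he hu hae hf hv haf
    have hef : e = f := by
      rw [hw, mul_assoc, hcent f hf (↑w⁻¹), ← mul_assoc, Units.mul_inv, one_mul]
    refine ⟨hef, ?_⟩
    have : e + u = f + v := by rw [← hae, ← haf]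
    rw [hef] at this
    exact add_left_cancel this
end

section
/- A ring R is uniquely nil clean if and only if R is conjugate nil clean and all idempotents of R are central. -/
/-- `a` is nil clean: a sum of an idempotent and a nilpotent. -/
def IsNilCleanElem {R : Type*} [Ring R] (a : R) : Prop :=
  ∃ e n : R, IsIdempotentElem e ∧ IsNilpotent n ∧ a = e + n

/-- `a` is conjugate nil clean. -/
def IsConjNilCleanElem {R : Type*} [Ring R] (a : R) : Prop :=
  IsNilCleanElem a ∧ ∀ e n f m : R, IsIdempotentElem e → IsNilpotent n → a = e + n →
    IsIdempotentElem f → IsNilpotent m → a = f + m → ConjugateIdem e f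

section Aux
variable {R : Type*} [Ring R] {e : R}

lemma aux_xe (he : IsIdempotentElem e) (r : R) : (e * r - e * r * e) * e = 0 := by
  simp only [sub_mul, mul_assoc, he.eq, sub_self]

lemma aux_ex (he : IsIdempotentElem e) (r : R) : e * (e * r - e * r * e) = e * r - e * r * e := by
  simp only [mul_sub, ← mul_assoc, he.eq]

lemma aux_xx (he : IsIdempotentElem e) (r : R) : (e * r - e * r * e) * (e * r - e * r * e) = 0 := by
  have h := aux_xe he r
  calc (e * r - e * r * e) * (e * r - e * r * e)
      = ((e * r - e * r * e) * e) * r - ((e * r - e * r * e) * e) * (r * e) := by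
        noncomm_ring
    _ = 0 := by rw [h]; simp

lemma aux_idem1 (he : IsIdempotentElem e) (r : R) : IsIdempotentElem (e + (e * r - e * r * e)) := by
  have := he.eq
  show _ = _
  rw [add_mul, mul_add, mul_add, he.eq, aux_ex he r, aux_xe he r, aux_xx he r]
  abel

lemma aux_nilp1 (he : IsIdempotentElem e) (r : R) : IsNilpotent (e * r - e * r * e) :=
  ⟨2, by rw [sq, aux_xx he r]⟩

lemma aux_ey (he : IsIdempotentElem e) (r : R) : e * (r * e - e * r * e) = 0 := by
  simp only [mul_sub, ← mul_assoc, he.eq, sub_self]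

lemma aux_ye (he : IsIdempotentElem e) (r : R) : (r * e - e * r * e) * e = r * e - e * r * e := by
  simp only [sub_mul, mul_assoc, he.eq]

lemma aux_yy (he : IsIdempotentElem e) (r : R) : (r * e - e * r * e) * (r * e - e * r * e) = 0 := by
  have h := aux_ey he r
  calc (r * e - e * r * e) * (r * e - e * r * e)
      = r * (e * (r * e - e * r * e)) - (e * r) * (e * (r * e - e * r * e)) := by
        noncomm_ring
    _ = 0 := by rw [h]; simp

lemma aux_idem2 (he : IsIdempotentElem e) (r : R) : IsIdempotentElem (e + (r * e - e * r * e)) := by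
  show _ = _
  rw [add_mul, mul_add, mul_add, he.eq, aux_ey he r, aux_ye he r, aux_yy he r]
  abel

lemma aux_nilp2 (he : IsIdempotentElem e) (r : R) : IsNilpotent (r * e - e * r * e) :=
  ⟨2, by rw [sq, aux_yy he r]⟩

end Aux

/-- `R` is uniquely nil clean iff it is conjugate nil clean and all idempotents are
central. -/
theorem uniquelyNilClean_iff_conjNilClean_and_idem_central {R : Type*} [Ring R] :
    (∀ a : R, IsNilCleanElem a ∧
      ∀ e n f m : R, IsIdempotentElem e → IsNilpotent n → a = e + n →
        IsIdempotentElem f → IsNilpotent m → a = f + m → e = f ∧ n = m) ↔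
    ((∀ a : R, IsConjNilCleanElem a) ∧
      ∀ e : R, IsIdempotentElem e → ∀ r : R, e * r = r * e) := by
  constructor
  · intro h
    constructor
    · intro a
      refine ⟨(h a).1, fun e n f m he hn hen hf hm hfm => ?_⟩
      obtain ⟨hef, -⟩ := (h a).2 e n f m he hn hen hf hm hfm
      exact ⟨1, by simp [hef]⟩
    · intro e he r
      have h1 : e * r = e * r * e := by
        have heq := ((h (e + (e * r - e * r * e))).2 e (e * r - e * r * e)
          (e + (e * r - e * r * e)) 0 he (aux_nilp1 he r) rfl (aux_idem1 he r)
          IsNilpotent.zero (add_zero _).symm).1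
        have h2 : e * r - e * r * e = 0 := by
          have := (left_eq_add.mp heq)
          exact this
        exact sub_eq_zero.mp h2
      have h2 : r * e = e * r * e := by
        have heq := ((h (e + (r * e - e * r * e))).2 e (r * e - e * r * e)
          (e + (r * e - e * r * e)) 0 he (aux_nilp2 he r) rfl (aux_idem2 he r)
          IsNilpotent.zero (add_zero _).symm).1
        have h3 : r * e - e * r * e = 0 := left_eq_add.mp heq
        exact sub_eq_zero.mp h3
      rw [h1, h2]
  · rintro ⟨hc, hcent⟩ a
    refine ⟨(hc a).1, fun e n f m he hn hen hf hm hfm => ?_⟩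
    obtain ⟨u, hu⟩ := (hc a).2 e n f m he hn hen hf hm hfm
    have hef : e = f := by
      rw [hu, ← hcent f hf ↑u, mul_assoc, Units.mul_inv, mul_one]
    refine ⟨hef, ?_⟩
    have : e + n = f + m := by rw [← hen, hfm]
    rw [hef] at this
    exact add_left_cancel this
end

section
/- Every idempotent of a nil clean ring R is a conjugate nil clean element of R. -/
/-- Key lemma: two idempotents whose difference is nilpotent are conjugate. -/
lemma conj_of_sub_nilpotent {R : Type*} [Ring R] {e f : R}
    (he : IsIdempotentElem e) (hf : IsIdempotentElem f)
    (hn : IsNilpotent (e - f)) : ConjugateIdem e f := by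
  have he1 : ∀ x : R, e * (e * x) = e * x := fun x => by rw [← mul_assoc, he.eq]
  have hf1 : ∀ x : R, f * (f * x) = f * x := fun x => by rw [← mul_assoc, hf.eq]
  set a : R := e*f + (1-e)*(1-f) with ha
  set b : R := f*e + (1-f)*(1-e) with hb
  set z : R := (e-f)*(e-f) with hzdef
  have hz : IsNilpotent z := by
    obtain ⟨k, hk⟩ := hn
    refine ⟨k, ?_⟩
    have : z ^ k = (e-f)^k * (e-f)^k := by
      rw [hzdef, ← pow_two, ← pow_mul, two_mul, pow_add]
    rw [this, hk, mul_zero]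
  have hab : a * b = 1 - z := by
    simp only [ha, hb, hzdef, mul_add, add_mul, mul_sub, sub_mul, mul_one, one_mul,
      mul_assoc, he.eq, hf.eq, he1, hf1]
    abel
  have hba : b * a = 1 - z := by
    simp only [ha, hb, hzdef, mul_add, add_mul, mul_sub, sub_mul, mul_one, one_mul,
      mul_assoc, he.eq, hf.eq, he1, hf1]
    abel
  have haz : a * (1 - z) = (1 - z) * a := by
    simp only [ha, hzdef, mul_add, add_mul, mul_sub, sub_mul, mul_one, one_mul,
      mul_assoc, he.eq, hf.eq, he1, hf1]
    abel
  obtain ⟨v, hv⟩ := hz.isUnit_one_sub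
  have hcomm : Commute a ↑v := by rw [hv]; exact haz
  have hcomm' : Commute a ↑v⁻¹ := hcomm.units_inv_right
  have h1 : a * (b * ↑v⁻¹) = 1 := by
    rw [← mul_assoc, hab, ← hv, Units.mul_inv]
  have h2 : (b * ↑v⁻¹) * a = 1 := by
    rw [mul_assoc, ← hcomm', ← mul_assoc, hba, ← hv, Units.mul_inv]
  refine ⟨⟨a, b * ↑v⁻¹, h1, h2⟩, ?_⟩
  rw [Units.eq_mul_inv_iff_mul_eq]
  show e * a = a * f
  simp only [ha, mul_add, add_mul, mul_sub, sub_mul, mul_one, one_mul,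
    mul_assoc, he.eq, hf.eq, he1, hf1]
  abel

lemma ConjugateIdem.symm {R : Type*} [Ring R] {e f : R}
    (h : ConjugateIdem e f) : ConjugateIdem f e := by
  obtain ⟨u, hu⟩ := h
  refine ⟨u⁻¹, ?_⟩
  rw [hu]
  simp [mul_assoc]

lemma ConjugateIdem.trans {R : Type*} [Ring R] {e f g : R}
    (h1 : ConjugateIdem e f) (h2 : ConjugateIdem f g) : ConjugateIdem e g := by
  obtain ⟨u, hu⟩ := h1
  obtain ⟨v, hv⟩ := h2
  refine ⟨u * v, ?_⟩
  rw [hu, hv]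
  simp [mul_assoc]

/-- Every idempotent of a nil clean ring is conjugate nil clean. -/
theorem idempotent_isConjNilClean {R : Type*} [Ring R]
    (hR : ∀ a : R, IsNilCleanElem a) (e : R) (he : IsIdempotentElem e) :
    IsConjNilCleanElem e := by
  constructor
  · exact ⟨e, 0, he, IsNilpotent.zero, by rw [add_zero]⟩
  · intro f n g m hf hn hefn hg hm hegm
    have h1 : ConjugateIdem e f :=
      conj_of_sub_nilpotent he hf (by rwa [show e - f = n by rw [hefn]; abel])
    have h2 : ConjugateIdem e g :=
      conj_of_sub_nilpotent he hg (by rwa [show e - g = m by rw [hegm]; abel])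
    exact h1.symm.trans h2
end

section
/- Let a be a conjugate clean element of a ring R. If a or a - 1 is invertible, then a is uniquely clean. In particular, every unit of R that is conjugate clean is uniquely clean. -/
/-- If `a` is conjugate clean and `a` or `a - 1` is invertible, then `a` is uniquely
clean. -/
theorem uniquelyClean_of_conjClean_of_unit {R : Type*} [Ring R] (a : R)
    (ha : IsConjCleanElem a) (h : IsUnit a ∨ IsUnit (a - 1)) :
    ∀ e u f v : R, IsIdempotentElem e → IsUnit u → a = e + u →
      IsIdempotentElem f → IsUnit v → a = f + v → e = f ∧ u = v := by
  intro e u f v he hu hae hf hv haf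
  obtain ⟨_, hconj⟩ := ha
  rcases h with hA | hA
  · -- a = 0 + a, idempotent 0
    have h0 : IsIdempotentElem (0 : R) := IsIdempotentElem.zero
    have ha0 : a = 0 + a := by abel
    have ce : ConjugateIdem e (0 : R) := hconj e u 0 a he hu hae h0 hA ha0
    have cf : ConjugateIdem f (0 : R) := hconj f v 0 a hf hv haf h0 hA ha0
    obtain ⟨w, hw⟩ := ce
    obtain ⟨w', hw'⟩ := cf
    have he0 : e = 0 := by simpa using hw
    have hf0 : f = 0 := by simpa using hw'
    constructor
    · rw [he0, hf0]
    · have : e + u = f + v := by rw [← hae, ← haf]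
      rw [he0, hf0] at this; simpa using this
  · -- a = 1 + (a - 1), idempotent 1
    have h1 : IsIdempotentElem (1 : R) := IsIdempotentElem.one
    have ha1 : a = 1 + (a - 1) := by abel
    have ce : ConjugateIdem e (1 : R) := hconj e u 1 (a - 1) he hu hae h1 hA ha1
    have cf : ConjugateIdem f (1 : R) := hconj f v 1 (a - 1) hf hv haf h1 hA ha1
    obtain ⟨w, hw⟩ := ce
    obtain ⟨w', hw'⟩ := cf
    have he1 : e = 1 := by simpa [mul_one, Units.mul_inv] using hw
    have hf1 : f = 1 := by simpa [mul_one, Units.mul_inv] using hw'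
    constructor
    · rw [he1, hf1]
    · have : e + u = f + v := by rw [← hae, ← haf]
      rw [he1, hf1] at this; simpa using this
end

section
/- The matrix ring M₂(𝔽₂) of 2×2 matrices over the field with two elements is conjugate nil clean: every matrix is a sum of an idempotent and a nilpotent matrix, and for any two such decompositions of the same matrix, the idempotents are conjugate by an invertible matrix. -/
private abbrev M2 := Matrix (Fin 2) (Fin 2) (ZMod 2)

private lemma nilp_iff (x : M2) : IsNilpotent x ↔ x * x = 0 := by
  constructor
  · intro h
    have h' : IsNilpotent (Matrix.toLinAlgEquiv' x) := h.map _
    have hc := IsNilpotent.charpoly_eq_X_pow_finrank h'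
    have hch := LinearMap.aeval_self_charpoly (Matrix.toLinAlgEquiv' x)
    rw [hc] at hch
    simp only [map_pow, Polynomial.aeval_X] at hch
    have hfr : Module.finrank (ZMod 2) (Fin 2 → ZMod 2) = 2 := by simp
    rw [hfr] at hch
    have h2 : (Matrix.toLinAlgEquiv' (x * x)) = 0 := by
      rw [map_mul, ← pow_two]; exact hch
    have := congrArg Matrix.toLinAlgEquiv'.symm h2
    simpa using this
  · intro h; exact ⟨2, by rw [sq]; exact h⟩

set_option maxRecDepth 100000 in
private lemma exists_decomp : ∀ a : M2, ∃ e : M2, e*e = e ∧ (a-e)*(a-e) = 0 := by decide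

set_option maxRecDepth 100000 in
set_option synthInstance.maxSize 1000 in
set_option synthInstance.maxHeartbeats 1000000 in
set_option maxHeartbeats 4000000 in
private lemma conj_core : ∀ a e f : M2, e*e = e → (a-e)*(a-e) = 0 → f*f = f → (a-f)*(a-f) = 0 →
    ∃ u v : M2, u*v = 1 ∧ v*u = 1 ∧ e = u*f*v := by decide

/-- `M₂(𝔽₂)` is conjugate nil clean. -/
theorem matrix_two_zmod_two_conjNilClean :
    ∀ a : Matrix (Fin 2) (Fin 2) (ZMod 2), IsConjNilCleanElem a := by
  intro a
  constructor
  · obtain ⟨e, he, hn⟩ := exists_decomp a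
    exact ⟨e, a - e, he, (nilp_iff _).mpr hn, by abel⟩
  · intro e n f m he hn hae hf hm haf
    have hne : n = a - e := by rw [hae]; abel
    have hmf : m = a - f := by rw [haf]; abel
    have h1 : (a - e) * (a - e) = 0 := by rw [← hne]; exact (nilp_iff _).mp hn
    have h2 : (a - f) * (a - f) = 0 := by rw [← hmf]; exact (nilp_iff _).mp hm
    obtain ⟨u, v, huv, hvu, hconj⟩ := conj_core a e f he h1 hf h2
    exact ⟨⟨u, v, huv, hvu⟩, hconj⟩
end

section
/- For n ≥ 3, the matrix ring Mₙ(𝔽₂) is not conjugate nil clean: there exists a matrix with two nil clean decompositions whose idempotents are not conjugate. -/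
/-- Embedding of `M₃` as the top-left block of `Mₙ` (as an additive/multiplicative map). -/
noncomputable def blockEmb (n : ℕ) (hn : 3 ≤ n) :
    Matrix (Fin 3) (Fin 3) (ZMod 2) → Matrix (Fin n) (Fin n) (ZMod 2) :=
  fun A => (Matrix.reindexAlgEquiv (ZMod 2) (ZMod 2)
    (finSumFinEquiv.trans (finCongr (by omega : 3 + (n - 3) = n))))
    (Matrix.fromBlocks A 0 0 0)

lemma blockEmb_mul (n : ℕ) (hn : 3 ≤ n) (A B : Matrix (Fin 3) (Fin 3) (ZMod 2)) :
    blockEmb n hn (A * B) = blockEmb n hn A * blockEmb n hn B := by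
  unfold blockEmb
  rw [← map_mul, Matrix.fromBlocks_multiply]
  simp

lemma blockEmb_add (n : ℕ) (hn : 3 ≤ n) (A B : Matrix (Fin 3) (Fin 3) (ZMod 2)) :
    blockEmb n hn (A + B) = blockEmb n hn A + blockEmb n hn B := by
  unfold blockEmb
  rw [← map_add, Matrix.fromBlocks_add]
  simp

lemma blockEmb_zero (n : ℕ) (hn : 3 ≤ n) : blockEmb n hn 0 = 0 := by
  unfold blockEmb
  simp

lemma blockEmb_inj (n : ℕ) (hn : 3 ≤ n) (A : Matrix (Fin 3) (Fin 3) (ZMod 2))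
    (h : blockEmb n hn A = 0) : A = 0 := by
  unfold blockEmb at h
  have h2 : Matrix.fromBlocks A (0 : Matrix (Fin 3) (Fin (n-3)) (ZMod 2))
      (0 : Matrix (Fin (n-3)) (Fin 3) (ZMod 2)) 0 = 0 := by
    apply (Matrix.reindexAlgEquiv (ZMod 2) (ZMod 2)
      (finSumFinEquiv.trans (finCongr (by omega : 3 + (n - 3) = n)))).injective
    rw [map_zero]
    exact h
  ext i j
  have := congrFun (congrFun h2 (Sum.inl i)) (Sum.inl j)
  simpa using this

/-- For `n ≥ 3`, `Mₙ(𝔽₂)` is not conjugate nil clean: some matrix has two nil clean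
decompositions whose idempotents are not conjugate. -/
theorem matrix_zmod_two_not_conjNilClean (n : ℕ) (hn : 3 ≤ n) :
    ∃ a e l f m : Matrix (Fin n) (Fin n) (ZMod 2),
      IsIdempotentElem e ∧ IsNilpotent l ∧ a = e + l ∧
      IsIdempotentElem f ∧ IsNilpotent m ∧ a = f + m ∧ ¬ ConjugateIdem e f := by
  set F : Matrix (Fin 3) (Fin 3) (ZMod 2) := !![1,0,0; 0,1,0; 0,0,0] with hF
  set M : Matrix (Fin 3) (Fin 3) (ZMod 2) := !![1,1,0; 1,0,1; 1,0,1] with hM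
  set L : Matrix (Fin 3) (Fin 3) (ZMod 2) := !![0,1,0; 1,1,1; 1,0,1] with hL
  have hFF : F * F = F := by decide
  have hM3 : M * M * M = 0 := by decide
  have hL3 : L * L * L = 0 := by decide
  have hsum : L = F + M := by decide
  have hFne : F ≠ 0 := by decide
  set φ := blockEmb n hn with hφ
  refine ⟨φ L, 0, φ L, φ F, φ M, ?_, ?_, ?_, ?_, ?_, ?_, ?_⟩
  · exact IsIdempotentElem.zero
  · exact ⟨3, by rw [pow_succ, pow_succ, pow_one, ← blockEmb_mul, ← blockEmb_mul, hL3,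
      blockEmb_zero]⟩
  · rw [zero_add]
  · show φ F * φ F = φ F
    rw [← blockEmb_mul, hFF]
  · exact ⟨3, by rw [pow_succ, pow_succ, pow_one, ← blockEmb_mul, ← blockEmb_mul, hM3,
      blockEmb_zero]⟩
  · rw [← blockEmb_add, ← hsum]
  · rintro ⟨u, hu⟩
    apply hFne
    apply blockEmb_inj n hn
    have h0 : ((u : Matrix (Fin n) (Fin n) (ZMod 2)) * φ F) * (↑u⁻¹ : Matrix (Fin n) (Fin n) (ZMod 2)) = 0 := hu.symm
    rw [Units.mul_left_eq_zero, Units.mul_right_eq_zero] at h0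
    exact h0
end

section
/- For any ring R and n ≥ 2, the matrix ring Mₙ(R) is not conjugate clean: there is an element with two clean decompositions whose idempotents are not conjugate (for example the permutation matrix swapping the first two basis vectors). -/
open Matrix in
/-- For any (nontrivial) ring `R` and `n ≥ 2`, `Mₙ(R)` is not conjugate clean: some
matrix has two clean decompositions whose idempotents are not conjugate. -/
theorem matrix_not_conjClean (R : Type*) [Ring R] [Nontrivial R] (n : ℕ) (hn : 2 ≤ n) :
    ∃ a e u f v : Matrix (Fin n) (Fin n) R,
      IsIdempotentElem e ∧ IsUnit u ∧ a = e + u ∧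
      IsIdempotentElem f ∧ IsUnit v ∧ a = f + v ∧ ¬ ConjugateIdem e f := by
  set i0 : Fin n := ⟨0, by omega⟩ with hi0
  set i1 : Fin n := ⟨1, by omega⟩ with hi1
  have h01 : i0 ≠ i1 := by simp [hi0, hi1, Fin.ext_iff]
  have h10 : i1 ≠ i0 := h01.symm
  set E : Fin n → Fin n → Matrix (Fin n) (Fin n) R := fun i j => single i j 1 with hE
  set s : Matrix (Fin n) (Fin n) R := 1 - E i0 i0 - E i1 i1 + E i0 i1 + E i1 i0 with hs
  have hss : s * s = 1 := by
    simp only [hs, hE, mul_sub, sub_mul, mul_add, add_mul, mul_one, one_mul]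
    simp [single_mul_single_same, single_mul_single_of_ne, h01, h10]
  have hvw : (s - E i0 i0) * (s + E i1 i1) = 1 := by
    simp only [sub_mul, mul_add, hss]
    simp only [hs, hE, mul_add, add_mul, sub_mul, mul_sub, mul_one, one_mul]
    simp [single_mul_single_same, single_mul_single_of_ne, h01, h10]
  have hwv : (s + E i1 i1) * (s - E i0 i0) = 1 := by
    simp only [add_mul, mul_sub, hss]
    simp only [hs, hE, mul_add, add_mul, sub_mul, mul_sub, mul_one, one_mul]
    simp [single_mul_single_same, single_mul_single_of_ne, h01, h10]
  refine ⟨s, 0, s, E i0 i0, s - E i0 i0, IsIdempotentElem.zero,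
    ⟨⟨s, s, hss, hss⟩, rfl⟩, by simp, ?_, ⟨⟨s - E i0 i0, s + E i1 i1, hvw, hwv⟩, rfl⟩,
    by abel, ?_⟩
  · show E i0 i0 * E i0 i0 = E i0 i0
    simp [hE]
  · rintro ⟨u, hu⟩
    have hu' : (0 : Matrix (Fin n) (Fin n) R) = u.val * E i0 i0 * (u⁻¹).val := hu
    have hVU : (u⁻¹).val * u.val = 1 := u.inv_mul
    have h3 : (u⁻¹).val * (u.val * E i0 i0 * (u⁻¹).val) * u.val = E i0 i0 := by
      calc (u⁻¹).val * (u.val * E i0 i0 * (u⁻¹).val) * u.val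
          = ((u⁻¹).val * u.val) * E i0 i0 * ((u⁻¹).val * u.val) := by noncomm_ring
        _ = E i0 i0 := by rw [hVU]; rw [one_mul, mul_one]
    have h0 : E i0 i0 = 0 := by rw [← h3, ← hu', mul_zero, zero_mul]
    have h1 : (E i0 i0) i0 i0 = (1 : R) := single_apply_same ..
    rw [h0] at h1
    simp at h1
end

section
/- A finite product R₁ × ⋯ × Rₙ of rings is conjugate nil clean if and only if each Rᵢ is conjugate nil clean. -/
lemma pi_isNilpotent_iff {n : ℕ} {R : Fin n → Type*} [∀ i, Ring (R i)] (x : ∀ i, R i) :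
    IsNilpotent x ↔ ∀ i, IsNilpotent (x i) := by
  constructor
  · rintro ⟨k, hk⟩ i
    exact ⟨k, congrFun hk i⟩
  · intro h
    choose k hk using h
    refine ⟨Finset.univ.sup k, funext fun i => ?_⟩
    have : x i ^ (Finset.univ.sup k) = 0 :=
      pow_eq_zero_of_le (Finset.le_sup (Finset.mem_univ i)) (hk i)
    simpa using this

lemma pi_isIdem_iff {n : ℕ} {R : Fin n → Type*} [∀ i, Ring (R i)] (x : ∀ i, R i) :
    IsIdempotentElem x ↔ ∀ i, IsIdempotentElem (x i) := by
  constructor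
  · intro h i; exact congrFun h i
  · intro h; exact funext fun i => h i

/-- A finite product of rings is conjugate nil clean iff each factor is. -/
theorem pi_conjNilClean_iff {n : ℕ} (R : Fin n → Type*) [∀ i, Ring (R i)] :
    (∀ a : (∀ i, R i), IsConjNilCleanElem a) ↔
      ∀ i, ∀ a : R i, IsConjNilCleanElem a := by
  constructor
  · intro H i a
    obtain ⟨⟨E, N, hE, hN, hEN⟩, huniq⟩ := H (Pi.single i a)
    constructor
    · refine ⟨E i, N i, (pi_isIdem_iff E).1 hE i, (pi_isNilpotent_iff N).1 hN i, ?_⟩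
      have := congrFun hEN i
      simpa using this
    · intro e nn f m he hn hen hf hm hfm
      have h1 : Pi.single i a = Pi.single i e + Pi.single i nn := by
        rw [← Pi.single_add, ← hen]
      have h2 : Pi.single i a = Pi.single i f + Pi.single i m := by
        rw [← Pi.single_add, ← hfm]
      have hse : IsIdempotentElem (Pi.single i e) := by
        rw [pi_isIdem_iff]
        intro j
        rcases eq_or_ne j i with rfl | hj
        · simpa using he
        · simp [Pi.single_eq_of_ne hj, IsIdempotentElem]
      have hsf : IsIdempotentElem (Pi.single i f) := by
        rw [pi_isIdem_iff]
        intro j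
        rcases eq_or_ne j i with rfl | hj
        · simpa using hf
        · simp [Pi.single_eq_of_ne hj, IsIdempotentElem]
      have hsn : IsNilpotent (Pi.single i nn) := by
        rw [pi_isNilpotent_iff]
        intro j
        rcases eq_or_ne j i with rfl | hj
        · simpa using hn
        · simp [Pi.single_eq_of_ne hj]
      have hsm : IsNilpotent (Pi.single i m) := by
        rw [pi_isNilpotent_iff]
        intro j
        rcases eq_or_ne j i with rfl | hj
        · simpa using hm
        · simp [Pi.single_eq_of_ne hj]
      obtain ⟨u, hu⟩ := huniq _ _ _ _ hse hsn h1 hsf hsm h2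
      refine ⟨Units.map (Pi.evalRingHom R i).toMonoidHom u, ?_⟩
      have := congrFun hu i
      simpa using this
  · intro H a
    constructor
    · choose e nn he hn hen using fun i => (H i (a i)).1
      refine ⟨e, nn, (pi_isIdem_iff e).2 he, (pi_isNilpotent_iff nn).2 hn, funext hen⟩
    · intro e nn f m he hn hen hf hm hfm
      have key : ∀ i, ConjugateIdem (e i) (f i) := fun i =>
        (H i (a i)).2 (e i) (nn i) (f i) (m i)
          ((pi_isIdem_iff e).1 he i) ((pi_isNilpotent_iff nn).1 hn i)
          (congrFun hen i)
          ((pi_isIdem_iff f).1 hf i) ((pi_isNilpotent_iff m).1 hm i)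
          (congrFun hfm i)
      choose u hu using key
      refine ⟨⟨fun i => u i, fun i => ↑(u i)⁻¹, ?_, ?_⟩, ?_⟩
      · exact funext fun i => (u i).mul_inv
      · exact funext fun i => (u i).inv_mul
      · exact funext fun i => hu i
end

section
/- Let I be an ideal of R contained in J(R) such that idempotents lift modulo I. Then R is conjugate clean if and only if R/I is conjugate clean. -/
/-- Noncommutative version: `r` with `r - 1` in the Jacobson radical is a unit. -/
lemma isUnit_of_sub_one_mem_jacobson_bot' {R : Type*} [Ring R] (r : R)
    (h : r - 1 ∈ Ideal.jacobson (⊥ : Ideal R)) : IsUnit r := by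
  obtain ⟨s, hs⟩ := Ideal.exists_mul_sub_mem_of_sub_one_mem_jacobson r h
  rw [Ideal.mem_bot, sub_eq_zero] at hs
  have hs1 : s - 1 ∈ Ideal.jacobson (⊥ : Ideal R) := by
    have h2 : s - 1 = -(s * (r - 1)) := by rw [mul_sub, mul_one, hs]; abel
    rw [h2]
    exact neg_mem (Ideal.mul_mem_left _ s h)
  obtain ⟨t, ht⟩ := Ideal.exists_mul_sub_mem_of_sub_one_mem_jacobson s hs1
  rw [Ideal.mem_bot, sub_eq_zero] at ht
  have htr : t = r := by
    calc t = t * (s * r) := by rw [hs, mul_one]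
    _ = t * s * r := by rw [mul_assoc]
    _ = r := by rw [ht, one_mul]
  exact isUnit_iff_exists.2 ⟨s, htr ▸ ht, hs⟩

/-- Idempotents congruent modulo an ideal contained in the Jacobson radical are conjugate. -/
lemma conjugateIdem_of_sub_mem {R : Type*} [Ring R] (I : TwoSidedIdeal R)
    (hI : ∀ x ∈ I, x ∈ Ideal.jacobson (⊥ : Ideal R))
    {e f : R} (he : IsIdempotentElem e) (hf : IsIdempotentElem f)
    (h : e - f ∈ I) : ConjugateIdem e f := by
  set u : R := 1 - e - f + (e * f + e * f) with hu
  have hmem : u - 1 ∈ I := by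
    have h2 : u - 1 = -(e * (e - f)) + (e - f) * f := by
      simp only [hu, mul_sub, sub_mul, he.eq, hf.eq]; abel
    rw [h2]
    exact I.add_mem (I.neg_mem (I.mul_mem_left _ _ h)) (I.mul_mem_right _ _ h)
  have hunit : IsUnit u := isUnit_of_sub_one_mem_jacobson_bot' u (hI _ hmem)
  obtain ⟨w, hw⟩ := hunit
  have key : e * u = u * f := by
    have h1 : e * u = e * f := by
      simp only [hu, mul_add, mul_sub, mul_one, ← mul_assoc, he.eq]; abel
    have h2 : u * f = e * f := by
      simp only [hu, add_mul, sub_mul, one_mul, mul_assoc, hf.eq]; abel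
    rw [h1, h2]
  refine ⟨w, ?_⟩
  have h3 : e * ↑w = ↑w * f := by rw [hw]; exact key
  calc e = e * ↑w * ↑w⁻¹ := by rw [mul_assoc]; simp
  _ = ↑w * f * ↑w⁻¹ := by rw [h3]

/-- Lifting units along a surjection with kernel in the Jacobson radical. -/
lemma isUnit_of_quotient_isUnit {R : Type*} [Ring R] (I : TwoSidedIdeal R)
    (hI : ∀ x ∈ I, x ∈ Ideal.jacobson (⊥ : Ideal R))
    (a : R) (h : IsUnit (I.ringCon.mk' a)) : IsUnit a := by
  obtain ⟨w, hw⟩ := h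
  obtain ⟨b, hb⟩ : ∃ b : R, I.ringCon.mk' b = ((w⁻¹ : (I.ringCon.Quotient)ˣ) : I.ringCon.Quotient) :=
    Quot.inductionOn ((w⁻¹ : (I.ringCon.Quotient)ˣ) : I.ringCon.Quotient) fun b => ⟨b, rfl⟩
  have hab : a * b - 1 ∈ I := by
    rw [← TwoSidedIdeal.rel_iff, ← RingCon.eq]
    show I.ringCon.mk' (a * b) = I.ringCon.mk' 1
    rw [map_mul, map_one, ← hw, hb]
    exact w.mul_inv
  have hba : b * a - 1 ∈ I := by
    rw [← TwoSidedIdeal.rel_iff, ← RingCon.eq]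
    show I.ringCon.mk' (b * a) = I.ringCon.mk' 1
    rw [map_mul, map_one, ← hw, hb]
    exact w.inv_mul
  have hab' : IsUnit (a * b) := isUnit_of_sub_one_mem_jacobson_bot' _ (hI _ hab)
  have hba' : IsUnit (b * a) := isUnit_of_sub_one_mem_jacobson_bot' _ (hI _ hba)
  obtain ⟨u, hu⟩ := hab'
  obtain ⟨v, hv⟩ := hba'
  refine isUnit_iff_exists.2 ⟨b * ↑u⁻¹, ?_, ?_⟩
  · rw [← mul_assoc, ← hu]; exact u.mul_inv
  · -- (b * u⁻¹) * a = 1 : b*u⁻¹ is a right inverse; also v⁻¹*b is a left inverse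
    have hleft : (↑v⁻¹ * b) * a = 1 := by rw [mul_assoc, ← hv]; exact v.inv_mul
    have hright : a * (b * ↑u⁻¹) = 1 := by rw [← mul_assoc, ← hu]; exact u.mul_inv
    have : b * ↑u⁻¹ = ↑v⁻¹ * b := by
      calc b * ↑u⁻¹ = ((↑v⁻¹ * b) * a) * (b * ↑u⁻¹) := by rw [hleft, one_mul]
      _ = (↑v⁻¹ * b) * (a * (b * ↑u⁻¹)) := by rw [mul_assoc]
      _ = ↑v⁻¹ * b := by rw [hright, mul_one]
    rw [this, hleft]

/-- Idempotents in the quotient lift to idempotents with the same image. -/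
lemma idem_lift {R : Type*} [Ring R] (I : TwoSidedIdeal R)
    (hlift : ∀ a : R, a ^ 2 - a ∈ I → ∃ e : R, IsIdempotentElem e ∧ e - a ∈ I)
    (b : I.ringCon.Quotient) (hb : IsIdempotentElem b) :
    ∃ e : R, IsIdempotentElem e ∧ I.ringCon.mk' e = b := by
  obtain ⟨x, hx⟩ : ∃ x : R, I.ringCon.mk' x = b :=
    Quot.inductionOn b fun x => ⟨x, rfl⟩
  have hx2 : x ^ 2 - x ∈ I := by
    rw [← TwoSidedIdeal.rel_iff, ← RingCon.eq]
    show I.ringCon.mk' (x ^ 2) = I.ringCon.mk' x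
    rw [map_pow, hx, sq]
    exact hb
  obtain ⟨e, he, hex⟩ := hlift x hx2
  refine ⟨e, he, ?_⟩
  rw [← hx]
  show ((e : I.ringCon.Quotient)) = x
  rw [RingCon.eq]
  exact (TwoSidedIdeal.rel_iff _ _ _).2 hex

/-- If `I ⊆ J(R)` and idempotents lift modulo `I`, then `R` is conjugate clean iff
`R/I` is conjugate clean. -/
theorem conjClean_iff_quotient_conjClean {R : Type*} [Ring R] (I : TwoSidedIdeal R)
    (hI : ∀ x ∈ I, x ∈ Ideal.jacobson (⊥ : Ideal R))
    (hlift : ∀ a : R, a ^ 2 - a ∈ I → ∃ e : R, IsIdempotentElem e ∧ e - a ∈ I) :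
    (∀ a : R, IsConjCleanElem a) ↔ (∀ b : I.ringCon.Quotient, IsConjCleanElem b) := by
  set π : R →+* I.ringCon.Quotient := I.ringCon.mk' with hπ
  constructor
  · intro H b
    obtain ⟨a, ha⟩ : ∃ a : R, π a = b := Quot.inductionOn b fun a => ⟨a, rfl⟩
    constructor
    · obtain ⟨⟨e, u, he, hu, hea⟩, -⟩ := H a
      refine ⟨π e, π u, ?_, hu.map π, by rw [← ha, hea, map_add]⟩
      show π e * π e = π e
      rw [← map_mul, he.eq]
    · intro eb ub fb vb heb hub hb1 hfb hvb hb2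
      obtain ⟨e, he, hpe⟩ := idem_lift I hlift eb heb
      obtain ⟨f, hf, hpf⟩ := idem_lift I hlift fb hfb
      have hpu : π (a - e) = ub := by
        rw [map_sub, ha, hpe, hb1, add_sub_cancel_left]
      have hpv : π (a - f) = vb := by
        rw [map_sub, ha, hpf, hb2, add_sub_cancel_left]
      have hu : IsUnit (a - e) := isUnit_of_quotient_isUnit I hI _ (hpu ▸ hub)
      have hv : IsUnit (a - f) := isUnit_of_quotient_isUnit I hI _ (hpv ▸ hvb)
      obtain ⟨-, H2⟩ := H a
      obtain ⟨w, hw⟩ := H2 e (a - e) f (a - f) he hu (by abel) hf hv (by abel)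
      refine ⟨Units.map (π : R →+* I.ringCon.Quotient) w, ?_⟩
      rw [← hpe, ← hpf, hw, ← map_inv]
      simp only [Units.coe_map, MonoidHom.coe_coe, map_mul]
      rfl
  · intro H a
    have hclean : ∀ x : R, ∃ e : R, IsIdempotentElem e ∧ IsUnit (x - e) := by
      intro x
      obtain ⟨⟨eb, ub, heb, hub, hb⟩, -⟩ := H (π x)
      obtain ⟨e, he, hpe⟩ := idem_lift I hlift eb heb
      have hpu : π (x - e) = ub := by rw [map_sub, hb, hpe, add_sub_cancel_left]
      exact ⟨e, he, isUnit_of_quotient_isUnit I hI _ (hpu ▸ hub)⟩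
    constructor
    · obtain ⟨e, he, hu⟩ := hclean a
      exact ⟨e, a - e, he, hu, by abel⟩
    · intro e u f v he hu hae hf hv haf
      have hq := (H (π a)).2 (π e) (π u) (π f) (π v)
        (show π e * π e = π e by rw [← map_mul, he.eq])
        (hu.map π) (by rw [hae, map_add])
        (show π f * π f = π f by rw [← map_mul, hf.eq])
        (hv.map π) (by rw [haf, map_add])
      obtain ⟨wb, hwb⟩ := hq
      obtain ⟨t0, ht0⟩ : ∃ t0 : R, π t0 = ↑wb :=
        Quot.inductionOn ((wb : I.ringCon.Quotient)) fun x => ⟨x, rfl⟩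
      obtain ⟨t, ht⟩ := isUnit_of_quotient_isUnit I hI t0 (ht0 ▸ wb.isUnit)
      have hmap : Units.map (π : R →+* I.ringCon.Quotient) t = wb :=
        Units.ext (by simpa [ht] using ht0)
      have hpt : π ↑t = (wb : I.ringCon.Quotient) := by rw [ht, ht0]
      have hptinv : π ↑t⁻¹ = ((wb⁻¹ : (I.ringCon.Quotient)ˣ) : I.ringCon.Quotient) := by
        rw [← hmap, ← map_inv]
        simp [Units.coe_map]
      have hg : IsIdempotentElem (↑t * f * ↑t⁻¹) := by
        show (↑t * f * ↑t⁻¹) * (↑t * f * ↑t⁻¹) = ↑t * f * ↑t⁻¹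
        have h1 : (↑t * f * ↑t⁻¹ : R) * (↑t * f * ↑t⁻¹) = ↑t * (f * (↑t⁻¹ * ↑t) * f) * ↑t⁻¹ := by
          noncomm_ring
        rw [h1, t.inv_mul, mul_one, hf.eq]
      have hef : e - ↑t * f * ↑t⁻¹ ∈ I := by
        rw [← TwoSidedIdeal.rel_iff, ← RingCon.eq]
        show π e = π (↑t * f * ↑t⁻¹)
        rw [map_mul, map_mul, hpt, hptinv, hwb]
      obtain ⟨c, hc⟩ := conjugateIdem_of_sub_mem I hI he hg hef
      refine ⟨c * t, ?_⟩
      rw [hc]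
      simp only [Units.val_mul, mul_inv_rev]
      noncomm_ring
end

section
/- Let I be a nil ideal of a ring R. Then R is conjugate nil clean if and only if R/I is conjugate nil clean. -/
theorem lift_idem_aux {R : Type*} [Ring R] :
    ∀ n : ℕ, ∀ x : R, (x ^ 2 - x) ^ n = 0 →
      ∃ e c : R, IsIdempotentElem e ∧ e = x + (x ^ 2 - x) * c := by
  intro n
  induction n using Nat.strong_induction_on with
  | _ n ih =>
    intro x hx
    match n, hx with
    | 0, hx =>
      have h01 : (0 : R) = 1 := by simpa using hx.symm
      exact ⟨x, 0, by unfold IsIdempotentElem; rw [← mul_one (x*x), ← h01, mul_zero, ← mul_one x, ← h01, mul_zero], by simp⟩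
    | 1, hx =>
      refine ⟨x, 0, ?_, by simp⟩
      have : x ^ 2 = x := by rwa [pow_one, sub_eq_zero] at hx
      unfold IsIdempotentElem
      rwa [← sq]
    | (m+2), hx =>
      set t := x ^ 2 - x with ht
      set y := 3 * x ^ 2 - 2 * x ^ 3 with hy
      have key : y ^ 2 - y = t ^ 2 * (4 * t - 3) := by
        simp only [hy, ht]; noncomm_ring
      have hcomm : Commute (t ^ 2) (4 * t - 3) :=
        ((Commute.ofNat_right (t^2) 4).mul_right ((Commute.refl t).pow_left 2)).sub_right
          (Commute.ofNat_right _ 3)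
      have hzero : (y ^ 2 - y) ^ (m + 1) = 0 := by
        rw [key, hcomm.mul_pow, ← pow_mul]
        have : t ^ (2 * (m + 1)) = 0 := by
          have : 2 * (m + 1) = (m + 2) + m := by ring
          rw [this, pow_add, hx, zero_mul]
        rw [this, zero_mul]
      obtain ⟨e, c, he, hec⟩ := ih (m + 1) (by omega) y hzero
      refine ⟨e, (1 - 2 * x) + t * ((4 * t - 3) * c), he, ?_⟩
      rw [hec, key]
      simp only [hy, ht]
      noncomm_ring

-- Two idempotents congruent modulo a nil ideal are conjugate.
theorem conj_of_mem_nil {R : Type*} [Ring R] (I : TwoSidedIdeal R)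
    (hI : ∀ x ∈ I, IsNilpotent x) {e f : R} (he : IsIdempotentElem e)
    (hf : IsIdempotentElem f) (hef : e - f ∈ I) : ConjugateIdem e f := by
  set u := e * f + (1 - e) * (1 - f) with hu
  have hf' : f * f = f := hf
  have he' : e * e = e := he
  have h0 : (1 - f) * f = 0 := by rw [sub_mul, one_mul, hf', sub_self]
  have h0' : e * (1 - e) = 0 := by rw [mul_sub, mul_one, he', sub_self]
  have h1 : u * f = e * f := by
    rw [hu, add_mul, mul_assoc, hf', mul_assoc, h0, mul_zero, add_zero]
  have h2 : e * u = e * f := by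
    rw [hu, mul_add, ← mul_assoc, he', ← mul_assoc, h0', zero_mul, add_zero]
  have hm : u - 1 = 2 * ((e - f) * f) - (e - f) := by
    have hh : (e - f) * f = e * f - f := by rw [sub_mul, hf']
    rw [hh, hu]; noncomm_ring
  have hmem : u - 1 ∈ I := by
    rw [hm]
    exact I.sub_mem (I.mul_mem_left 2 _ (I.mul_mem_right _ _ hef)) hef
  have hunit : IsUnit u := by
    have : IsNilpotent (1 - u) := by
      have := hI _ (I.neg_mem hmem)
      simpa [neg_sub] using this
    simpa using this.isUnit_one_sub
  obtain ⟨v, hv⟩ := hunit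
  refine ⟨v, ?_⟩
  have : v * f = e * v := by rw [hv, h1, h2]
  calc e = e * (v * ↑v⁻¹) := by simp
    _ = (e * v) * ↑v⁻¹ := by rw [mul_assoc]
    _ = ↑v * f * ↑v⁻¹ := by rw [← this]

/-- If `I` is a nil ideal of `R`, then `R` is conjugate nil clean iff `R/I` is
conjugate nil clean. -/
theorem conjNilClean_iff_quotient_conjNilClean {R : Type*} [Ring R] (I : TwoSidedIdeal R)
    (hI : ∀ x ∈ I, IsNilpotent x) :
    (∀ a : R, IsConjNilCleanElem a) ↔ (∀ b : I.ringCon.Quotient, IsConjNilCleanElem b) := by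
  set π := I.ringCon.mk' with hπ
  have hsurj : Function.Surjective π := fun b => Quot.inductionOn b fun a => ⟨a, rfl⟩
  have hker : ∀ a b : R, π a = π b ↔ a - b ∈ I := fun a b =>
    (I.ringCon.eq).trans (I.rel_iff a b)
  have hker0 : ∀ a : R, π a = 0 ↔ a ∈ I := by
    intro a
    have := hker a 0
    simpa using this
  have hnil : ∀ a : R, IsNilpotent (π a) → IsNilpotent a := by
    intro a ⟨k, hk⟩
    have : a ^ k ∈ I := by rw [← hker0, map_pow, hk]
    obtain ⟨m, hm⟩ := hI _ this
    exact ⟨k * m, by rw [pow_mul, hm]⟩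
  have hidem : ∀ x : R, IsIdempotentElem (π x) → ∃ e : R, IsIdempotentElem e ∧ π e = π x := by
    intro x hx
    have hmem : x ^ 2 - x ∈ I := by
      rw [← hker0, map_sub, map_pow]
      have : π x * π x = π x := hx
      rw [sq, this, sub_self]
    obtain ⟨k, hk⟩ := hI _ hmem
    obtain ⟨e, c, he, hec⟩ := lift_idem_aux k x hk
    refine ⟨e, he, ?_⟩
    rw [hker, hec]
    simpa using I.mul_mem_right _ _ hmem
  have hunitlift : ∀ (u : (I.ringCon.Quotient)ˣ) (v : R), π v = ↑u → IsUnit v := by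
    intro u v hv
    obtain ⟨w, hw⟩ := hsurj ↑u⁻¹
    have h1 : IsUnit (v * w) := by
      have : 1 - v * w ∈ I := by
        rw [← hker0, map_sub, map_one, map_mul, hv, hw]; simp
      simpa using (hI _ this).isUnit_one_sub
    have h2 : IsUnit (w * v) := by
      have : 1 - w * v ∈ I := by
        rw [← hker0, map_sub, map_one, map_mul, hv, hw]; simp
      simpa using (hI _ this).isUnit_one_sub
    obtain ⟨u1, hu1⟩ := h1
    obtain ⟨u2, hu2⟩ := h2
    have hr : v * (w * ↑u1⁻¹) = 1 := by rw [← mul_assoc, ← hu1]; simp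
    have hl : (↑u2⁻¹ * w) * v = 1 := by rw [mul_assoc, ← hu2]; simp
    have heq : (↑u2⁻¹ * w : R) = w * ↑u1⁻¹ := by
      calc (↑u2⁻¹ * w : R) = ↑u2⁻¹ * w * (v * (w * ↑u1⁻¹)) := by rw [hr, mul_one]
        _ = (↑u2⁻¹ * w * v) * (w * ↑u1⁻¹) := by noncomm_ring
        _ = w * ↑u1⁻¹ := by rw [hl, one_mul]
    exact ⟨⟨v, w * ↑u1⁻¹, hr, by rw [← heq, hl]⟩, rfl⟩
  -- lifting a nil clean decomposition of π a to one of a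
  have hliftdec : ∀ (a : R) (eb nb : I.ringCon.Quotient), IsIdempotentElem eb → IsNilpotent nb →
      π a = eb + nb → ∃ e : R, IsIdempotentElem e ∧ IsNilpotent (a - e) ∧ π e = eb := by
    intro a eb nb heb hnb hab
    obtain ⟨x, hx⟩ := hsurj eb
    obtain ⟨e, he, hex⟩ := hidem x (by rw [hx]; exact heb)
    have hpe : π e = eb := by rw [hex, hx]
    refine ⟨e, he, hnil _ ?_, hpe⟩
    rw [map_sub, hpe, hab]
    simpa using hnb
  constructor
  · -- R CNC → quotient CNC
    intro hR b
    obtain ⟨a, rfl⟩ := hsurj b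
    obtain ⟨⟨e, n, he, hn, hen⟩, _⟩ := hR a
    constructor
    · exact ⟨π e, π n, he.map π, hn.map π, by rw [hen, map_add]⟩
    · rintro eb nb fb mb heb hnb h1 hfb hmb h2
      obtain ⟨e', he', hne', hpe'⟩ := hliftdec a eb nb heb hnb h1
      obtain ⟨f', hf', hnf', hpf'⟩ := hliftdec a fb mb hfb hmb h2
      obtain ⟨u, hu⟩ := (hR a).2 e' (a - e') f' (a - f') he' hne' (by abel) hf' hnf' (by abel)
      refine ⟨Units.map π.toMonoidHom u, ?_⟩
      have h3 : ((Units.map π.toMonoidHom u : (I.ringCon.Quotient)ˣ) : I.ringCon.Quotient) = π ↑u := rfl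
      have h4 : ((Units.map π.toMonoidHom u)⁻¹ : (I.ringCon.Quotient)ˣ) = Units.map π.toMonoidHom u⁻¹ := by
        rw [← map_inv]
      rw [← hpe', ← hpf', hu, h4]
      simp [map_mul]
  · -- quotient CNC → R CNC
    intro hQ a
    obtain ⟨⟨eb, nb, heb, hnb, hab⟩, _⟩ := hQ (π a)
    obtain ⟨e, he, hne, hpe⟩ := hliftdec a eb nb heb hnb hab
    constructor
    · exact ⟨e, a - e, he, hne, by abel⟩
    · intro e n f m he hn hen hf hm hfm
      have hde : π a = π e + π n := by rw [hen, map_add]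
      have hdf : π a = π f + π m := by rw [hfm, map_add]
      obtain ⟨U, hU⟩ := (hQ (π a)).2 (π e) (π n) (π f) (π m)
        (he.map π) (hn.map π) hde (hf.map π) (hm.map π) hdf
      obtain ⟨v, hv⟩ := hsurj ↑U
      obtain ⟨vu, hvu⟩ := hunitlift U v hv
      have hW : Units.map π.toMonoidHom vu = U := by
        ext
        show π ↑vu = ↑U
        rw [hvu, hv]
      have hπvinv : π ↑vu⁻¹ = ↑U⁻¹ := by
        rw [← hW, ← map_inv]
        rfl
      set g := (↑vu : R) * f * ↑vu⁻¹ with hg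
      have hgidem : IsIdempotentElem g := by
        have hf' : f * f = f := hf
        show g * g = g
        rw [hg]
        calc ↑vu * f * ↑vu⁻¹ * (↑vu * f * ↑vu⁻¹)
            = ↑vu * f * (↑vu⁻¹ * ↑vu) * f * ↑vu⁻¹ := by noncomm_ring
          _ = ↑vu * (f * f) * ↑vu⁻¹ := by rw [Units.inv_mul]; noncomm_ring
          _ = ↑vu * f * ↑vu⁻¹ := by rw [hf']
      have hpg : π e = π g := by
        rw [hg, map_mul, map_mul, hvu, hv, hπvinv, ← hU]
      obtain ⟨w, hw⟩ := conj_of_mem_nil I hI he hgidem ((hker e g).1 hpg)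
      refine ⟨w * vu, ?_⟩
      rw [hw, hg]
      simp [Units.val_mul, mul_assoc]
end

section
/- If R is a nil clean ring, then 2R is a nil ideal of R; in fact the element 2 = 1 + 1 is nilpotent in R. -/
/-- In a nil clean ring, `2` is nilpotent and the ideal `2R` is nil. -/
theorem two_nilpotent_of_nilClean {R : Type*} [Ring R]
    (hR : ∀ a : R, IsNilCleanElem a) :
    IsNilpotent (2 : R) ∧ ∀ x ∈ Ideal.span ({2} : Set R), IsNilpotent x := by
  obtain ⟨e, n, he, hn, hen⟩ := hR (-1)
  have he' : e = -1 - n := by rw [hen]; abel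
  have hkey : (2 : R) = -n * (3 + n) := by
    have h := he
    rw [IsIdempotentElem, he'] at h
    have h2 : (1 : R) + n + n + n * n = -1 - n := by rw [← h]; noncomm_ring
    have h3 : (2 : R) = (1 + n + n + n * n) - (-1 - n) - n - n - n - n * n := by
      abel_nf
      rw [two_smul, one_add_one_eq_two]
    rw [h3, h2]
    noncomm_ring
  have hcomm : Commute (-n) (3 + n) := by
    unfold Commute SemiconjBy; noncomm_ring
  have h2 : IsNilpotent (2 : R) := by
    rw [hkey]; exact hcomm.isNilpotent_mul_right hn.neg
  refine ⟨h2, fun x hx => ?_⟩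
  rw [Ideal.span, Submodule.mem_span_singleton] at hx
  obtain ⟨a, ha⟩ := hx
  rw [← ha, smul_eq_mul]
  exact (Commute.ofNat_right a 2).isNilpotent_mul_left h2
end

section
/- For any ring R and any n ≥ 3, the matrix ring Mₙ(R) is not conjugate nil clean. -/
section aux
variable {R : Type*} [Ring R] {n : ℕ}

def embM (hn : 3 ≤ n) (A : Matrix (Fin 3) (Fin 3) R) : Matrix (Fin n) (Fin n) R :=
  fun i j => if h : i.1 < 3 ∧ j.1 < 3 then A ⟨i.1, h.1⟩ ⟨j.1, h.2⟩ else 0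

lemma embM_zero (hn : 3 ≤ n) : embM (R := R) hn 0 = 0 := by
  ext i j; simp [embM]

lemma embM_add (hn : 3 ≤ n) (A B : Matrix (Fin 3) (Fin 3) R) :
    embM hn (A + B) = embM hn A + embM hn B := by
  ext i j
  by_cases h : i.1 < 3 ∧ j.1 < 3 <;> simp [embM, h]

lemma embM_mul (hn : 3 ≤ n) (A B : Matrix (Fin 3) (Fin 3) R) :
    embM hn (A * B) = embM hn A * embM hn B := by
  ext i j
  rw [Matrix.mul_apply]
  by_cases h : i.1 < 3 ∧ j.1 < 3
  · have hzero : ∀ k ∈ (Finset.univ : Finset (Fin n)),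
        k ∉ Finset.univ.map (Fin.castLEEmb hn) →
        embM hn A i k * embM hn B k j = 0 := by
      intro k _ hk
      have hk3 : ¬ k.1 < 3 := by
        intro hlt
        exact hk (Finset.mem_map.mpr ⟨⟨k.1, hlt⟩, Finset.mem_univ _, by
          simp [Fin.castLEEmb, Fin.castLE, Fin.ext_iff]⟩)
      have hA : embM hn A i k = 0 := by simp [embM, hk3]
      rw [hA, zero_mul]
    rw [← Finset.sum_subset (Finset.subset_univ _) hzero, Finset.sum_map]
    have hterm : ∀ k : Fin 3,
        embM hn A i (Fin.castLEEmb hn k) * embM hn B (Fin.castLEEmb hn k) j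
        = A ⟨i.1, h.1⟩ k * B k ⟨j.1, h.2⟩ := by
      intro k
      simp [embM, Fin.castLEEmb, Fin.castLE, h.1, h.2, k.isLt, Fin.ext_iff]
    rw [Finset.sum_congr rfl (fun k _ => hterm k)]
    simp [embM, h, Matrix.mul_apply]
  · have hz : ∀ k : Fin n, embM hn A i k * embM hn B k j = 0 := by
      intro k
      rcases not_and_or.mp h with hi | hj
      · have hA : embM hn A i k = 0 := by
          simp only [embM]; rw [dif_neg]; exact fun h' => hi h'.1
        rw [hA, zero_mul]
      · have hB : embM hn B k j = 0 := by
          simp only [embM]; rw [dif_neg]; exact fun h' => hj h'.2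
        rw [hB, mul_zero]
    rw [Finset.sum_congr rfl (fun k _ => hz k), Finset.sum_const_zero]
    simp [embM, h]

def F3 (R : Type*) [Ring R] : Matrix (Fin 3) (Fin 3) R := !![0,-1,-1; 0,1,0; 0,0,1]
def M3 (R : Type*) [Ring R] : Matrix (Fin 3) (Fin 3) R := !![0,0,0; 0,0,1; 1,0,0]
def C3 (R : Type*) [Ring R] : Matrix (Fin 3) (Fin 3) R := !![-1,0,-1; 1,0,1; 0,-1,-1]

lemma F3_idem : F3 R * F3 R = F3 R := by
  ext i j
  fin_cases i <;> fin_cases j <;>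
    simp [F3, Matrix.mul_apply, Fin.sum_univ_succ, Matrix.vecHead, Matrix.vecTail]

lemma M3_cube : M3 R * M3 R * M3 R = 0 := by
  ext i j
  fin_cases i <;> fin_cases j <;>
    simp [M3, Matrix.mul_apply, Fin.sum_univ_succ, Matrix.vecHead, Matrix.vecTail]

lemma A3_cube : (F3 R + M3 R) * (F3 R + M3 R) * (F3 R + M3 R) = C3 R + C3 R := by
  ext i j
  fin_cases i <;> fin_cases j <;>
    simp [F3, M3, C3, Matrix.mul_apply, Fin.sum_univ_succ, Matrix.vecHead, Matrix.vecTail] <;>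
    ring

end aux

/-- For any (nontrivial) ring `R` and `n ≥ 3`, `Mₙ(R)` is not conjugate nil clean. -/
theorem matrix_not_conjNilClean (R : Type*) [Ring R] [Nontrivial R] (n : ℕ) (hn : 3 ≤ n) :
    ¬ ∀ a : Matrix (Fin n) (Fin n) R, IsConjNilCleanElem a := by
  intro h
  -- Step 1: 2 is nilpotent in (Matrix (Fin n) (Fin n) R)
  obtain ⟨⟨e, q, he, hq, hmo⟩, -⟩ := h (-1)
  have he' : e = -(1 + q) := by
    have h1 : e + q = -1 := hmo.symm
    have h2 : e = -1 - q := eq_sub_of_add_eq h1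
    rw [h2, neg_add, sub_eq_add_neg]
  have heu : IsUnit e := he' ▸ (hq.isUnit_one_add).neg
  have he1 : e = 1 := heu.mul_left_cancel (by rw [mul_one]; exact he)
  have hqv : q = -2 := by
    rw [he1] at hmo
    have h2 : q = -1 - 1 := eq_sub_of_add_eq (by rw [add_comm, ← hmo])
    rw [h2, ← one_add_one_eq_two, neg_add]; abel
  have h2nil : IsNilpotent (2 : (Matrix (Fin n) (Fin n) R)) := by
    have : IsNilpotent (-2 : (Matrix (Fin n) (Fin n) R)) := hqv ▸ hq
    simpa using this.neg
  obtain ⟨k, hk⟩ := h2nil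
  -- Step 2: the two decompositions of F + M
  set F : (Matrix (Fin n) (Fin n) R) := embM hn (F3 R) with hF
  set M : (Matrix (Fin n) (Fin n) R) := embM hn (M3 R) with hM
  have hFi : IsIdempotentElem F := by
    show F * F = F
    rw [hF, ← embM_mul, F3_idem]
  have hMnil : IsNilpotent M := by
    refine ⟨3, ?_⟩
    rw [pow_succ, pow_succ, pow_one, hM, ← embM_mul, ← embM_mul, M3_cube, embM_zero]
  have hFA : F + M = embM hn (F3 R + M3 R) := (embM_add hn _ _).symm
  have hA3 : (F + M) ^ 3 = 2 * embM hn (C3 R) := by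
    rw [pow_succ, pow_succ, pow_one, hFA, ← embM_mul, ← embM_mul, A3_cube, embM_add, two_mul]
  have hAnil : IsNilpotent (F + M) := by
    refine ⟨3 * k, ?_⟩
    rw [pow_mul, hA3]
    have hcomm : Commute (2 : (Matrix (Fin n) (Fin n) R)) (embM hn (C3 R)) := by
      simpa using (Nat.cast_commute (2 : ℕ) (embM hn (C3 R)))
    rw [hcomm.mul_pow, hk, zero_mul]
  -- Step 3: conjugacy forces F = 0
  obtain ⟨-, huniq⟩ := h (F + M)
  have hc : ConjugateIdem (0 : (Matrix (Fin n) (Fin n) R)) F :=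
    huniq 0 (F + M) F M (by simp [IsIdempotentElem]) hAnil (by rw [zero_add]) hFi hMnil rfl
  obtain ⟨u, hu⟩ := hc
  have h1 : u.val * F = 0 := by
    calc u.val * F = u.val * F * (u⁻¹).val * u.val := (Units.inv_mul_cancel_right _ u).symm
    _ = 0 * u.val := by rw [← hu]
    _ = 0 := zero_mul _
  have hF0 : F = 0 := by
    calc F = (u⁻¹).val * (u.val * F) := (Units.inv_mul_cancel_left u F).symm
    _ = (u⁻¹).val * 0 := by rw [h1]
    _ = 0 := mul_zero _
  have h11 := congrFun (congrFun hF0 ⟨1, by omega⟩) ⟨1, by omega⟩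
  have hfin : (1 : R) = 0 := by simpa [hF, embM, F3] using h11
  exact one_ne_zero hfin
end

section
/- Let R be a ring in which the set N(R) of nilpotent elements is an ideal. If R is nil clean, then R is conjugate nil clean. -/
/-- If the nilpotent elements of `R` form an ideal and `R` is nil clean, then `R` is
conjugate nil clean. -/
theorem conjNilClean_of_nilClean_of_nilpotents_ideal {R : Type*} [Ring R]
    (hN : ∃ I : TwoSidedIdeal R, ∀ x : R, x ∈ I ↔ IsNilpotent x)
    (hR : ∀ a : R, IsNilCleanElem a) :
    ∀ a : R, IsConjNilCleanElem a := by
  obtain ⟨I, hI⟩ := hN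
  intro a
  refine ⟨hR a, ?_⟩
  intro e n f m he hn hae hf hm haf
  -- e - f ∈ I
  have hef : e - f ∈ I := by
    have : e - f = m - n := by
      have h := hae.symm.trans haf
      rw [sub_eq_sub_iff_add_eq_add, h, add_comm f m]
    rw [this]
    exact I.sub_mem ((hI m).mpr hm) ((hI n).mpr hn)
  have hfe : f - e ∈ I := by simpa using I.neg_mem hef
  -- 1 - u where u = 1 - e - f + 2*e*f
  have h1 : e - e * f ∈ I := by
    have := I.mul_mem_left e _ hef
    simpa [mul_sub, he.eq] using this
  have h2 : f - e * f ∈ I := by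
    have := I.mul_mem_right _ f hfe
    simpa [sub_mul, hf.eq] using this
  have hsum : e + f - 2 * e * f ∈ I := by
    have := I.add_mem h1 h2
    have heq : e - e * f + (f - e * f) = e + f - 2 * e * f := by noncomm_ring
    rwa [heq] at this
  have hnil : IsNilpotent (e + f - 2 * e * f) := (hI _).mp hsum
  have hu : IsUnit (1 - (e + f - 2 * e * f)) := hnil.isUnit_one_sub
  obtain ⟨u, hu⟩ := hu
  refine ⟨u, ?_⟩
  have key : e * ↑u = ↑u * f := by
    rw [hu]
    have : e * (1 - (e + f - 2 * e * f)) = e * f := by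
      have h2' : e * (2 * e * f) = 2 * (e * f) := by
        calc e * (2 * e * f) = 2 * (e * e * f) := by noncomm_ring
        _ = 2 * (e * f) := by rw [he.eq]
      calc e * (1 - (e + f - 2 * e * f)) = e - e * e - e * f + e * (2 * e * f) := by noncomm_ring
      _ = e - e - e * f + 2 * (e * f) := by rw [he.eq, h2']
      _ = e * f := by noncomm_ring
    rw [this]
    have h2'' : 2 * e * f * f = 2 * (e * f) := by
      calc 2 * e * f * f = 2 * (e * (f * f)) := by noncomm_ring
      _ = 2 * (e * f) := by rw [hf.eq]
    calc e * f = f - f * f - e * f + 2 * (e * f) := by rw [hf.eq]; noncomm_ring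
    _ = (1 - (e + f - 2 * e * f)) * f := by rw [← h2'']; noncomm_ring
  calc e = e * ↑u * ↑u⁻¹ := by rw [mul_assoc, u.mul_inv, mul_one]
  _ = ↑u * f * ↑u⁻¹ := by rw [key]
end

section
/- Let R be a commutative ring. Then R is nil clean if and only if R/J(R) is a Boolean ring and J(R) is a nil ideal. -/
/-- A commutative ring is nil clean iff `R/J(R)` is Boolean and `J(R)` is nil. -/
theorem commRing_nilClean_iff {R : Type*} [CommRing R] :
    (∀ a : R, ∃ e n : R, IsIdempotentElem e ∧ IsNilpotent n ∧ a = e + n) ↔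
    ((∀ b : R ⧸ Ideal.jacobson (⊥ : Ideal R), IsIdempotentElem b) ∧
      ∀ x ∈ Ideal.jacobson (⊥ : Ideal R), IsNilpotent x) := by
  set J := Ideal.jacobson (⊥ : Ideal R) with hJ
  have hnilJ : ∀ n : R, IsNilpotent n → n ∈ J := by
    intro n hn
    rw [hJ, Ideal.mem_jacobson_bot]
    intro y
    have : IsNilpotent (-(n * y)) := ((Commute.all n y).isNilpotent_mul_right hn).neg
    simpa [sub_neg_eq_add, add_comm] using this.isUnit_one_sub
  constructor
  · rintro h
    constructor
    · intro b
      obtain ⟨a, rfl⟩ := Ideal.Quotient.mk_surjective b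
      obtain ⟨e, n, he, hn, rfl⟩ := h a
      have : (Ideal.Quotient.mk J) n = 0 := Ideal.Quotient.eq_zero_iff_mem.2 (hnilJ n hn)
      have : (Ideal.Quotient.mk J) (e + n) = (Ideal.Quotient.mk J) e := by
        simp [this]
      rw [this]
      exact he.map (Ideal.Quotient.mk J)
    · intro x hx
      obtain ⟨e, n, he, hn, hx'⟩ := h x
      have heJ : e ∈ J := by
        have : e = x - n := by rw [hx']; ring
        rw [this]
        exact J.sub_mem hx (hnilJ n hn)
      -- an idempotent in the Jacobson radical is zero
      have he0 : e = 0 := by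
        have hu : IsUnit (e * (-1) + 1) := (Ideal.mem_jacobson_bot.1 heJ) (-1)
        have h1e : (1 - e) * e = 0 := by
          rw [sub_mul, one_mul, he.eq, sub_self]
        have : e * (-1) + 1 = 1 - e := by ring
        rw [this] at hu
        obtain ⟨u, hu'⟩ := hu
        calc e = 1 * e := (one_mul e).symm
          _ = (↑u⁻¹ * (1 - e)) * e := by rw [← hu', u.inv_mul]
          _ = ↑u⁻¹ * ((1 - e) * e) := by ring
          _ = 0 := by rw [h1e, mul_zero]
      rw [hx', he0, zero_add]
      exact hn
  · rintro ⟨hbool, hnil⟩ a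
    have hker : ∀ x ∈ RingHom.ker (Ideal.Quotient.mk J), IsNilpotent x := by
      intro x hx
      exact hnil x (by simpa [Ideal.mk_ker] using hx)
    obtain ⟨e, he, hee⟩ := exists_isIdempotentElem_eq_of_ker_isNilpotent
      (Ideal.Quotient.mk J) hker ((Ideal.Quotient.mk J) a) ⟨a, rfl⟩
      (hbool ((Ideal.Quotient.mk J) a))
    refine ⟨e, a - e, he, ?_, by ring⟩
    apply hnil
    have : (Ideal.Quotient.mk J) (a - e) = 0 := by simp [hee]
    exact Ideal.Quotient.eq_zero_iff_mem.1 this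
end
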